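/- Fix real numbers a ≤ b with b − a ≤ 2π. Define f(μ) for μ in the open unit disk of ℝ² as the two-dimensional Lebesgue measure of the set of points u in the closed unit disk for which there exist t ≥ 1 and θ ∈ [a, b] with μ + t•(u − μ) = (cos θ, sin θ). Then f is affine on the open unit disk: for all μ, ν in the open unit disk and all 0 ≤ c ≤ 1, f(c•μ + (1−c)•ν) = c·f(μ) + (1−c)·f(ν). -/

import Mathlib

open MeasureTheory Real Set

set_option maxHeartbeats 1000000

noncomputable def shadowMeasure (a b : ℝ) (m : ℝ × ℝ) : ℝ :=
  (volume {u : ℝ × ℝ | u.1 ^ 2 + u.2 ^ 2 ≤ 1 ∧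
    ∃ t ≥ (1 : ℝ), ∃ θ ∈ Set.Icc a b,
      m + t • (u - m) = (Real.cos θ, Real.sin θ)}).toReal

namespace ShadowAux

/-- The cone parametrization `(s, θ) ↦ m + s • (P θ - m)`. -/
noncomputable def g (m : ℝ × ℝ) (p : ℝ × ℝ) : ℝ × ℝ := m + p.1 • ((cos p.2, sin p.2) - m)

lemma g_def (m p : ℝ × ℝ) :
    g m p = (m.1 + (p.1 * cos p.2 - p.1 * m.1), m.2 + (p.1 * sin p.2 - p.1 * m.2)) := by
  simp [g, Prod.ext_iff, smul_eq_mul]; constructor <;> ring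

/-- The derivative of `g m`. -/
noncomputable def B (m : ℝ × ℝ) (p : ℝ × ℝ) : ℝ × ℝ →L[ℝ] ℝ × ℝ :=
  LinearMap.toContinuousLinearMap (Matrix.toLin (Module.Basis.finTwoProd ℝ) (Module.Basis.finTwoProd ℝ)
    !![cos p.2 - m.1, -p.1 * sin p.2; sin p.2 - m.2, p.1 * cos p.2])

lemma hasFDerivAt_g (m : ℝ × ℝ) (p : ℝ × ℝ) : HasFDerivAt (g m) (B m p) p := by
  have hg : g m = fun p : ℝ × ℝ =>
      (m.1 + (p.1 * cos p.2 - p.1 * m.1), m.2 + (p.1 * sin p.2 - p.1 * m.2)) :=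
    funext fun p => g_def m p
  rw [hg, B, Matrix.toLin_finTwoProd_toContinuousLinearMap]
  have h1 : HasFDerivAt (fun p : ℝ × ℝ => m.1 + (p.1 * cos p.2 - p.1 * m.1))
      ((cos p.2 - m.1) • ContinuousLinearMap.fst ℝ ℝ ℝ
        + (-p.1 * sin p.2) • ContinuousLinearMap.snd ℝ ℝ ℝ) p := by
    have := ((hasFDerivAt_fst.mul ((hasDerivAt_cos p.2).comp_hasFDerivAt p
      hasFDerivAt_snd)).sub ((hasFDerivAt_fst (𝕜 := ℝ) (E := ℝ) (F := ℝ)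
        (p := p)).mul_const m.1)).const_add m.1
    refine this.congr_fderiv ?_
    ext <;> simp [smul_smul]
  have h2 : HasFDerivAt (fun p : ℝ × ℝ => m.2 + (p.1 * sin p.2 - p.1 * m.2))
      ((sin p.2 - m.2) • ContinuousLinearMap.fst ℝ ℝ ℝ
        + (p.1 * cos p.2) • ContinuousLinearMap.snd ℝ ℝ ℝ) p := by
    have := ((hasFDerivAt_fst.mul ((hasDerivAt_sin p.2).comp_hasFDerivAt p
      hasFDerivAt_snd)).sub ((hasFDerivAt_fst (𝕜 := ℝ) (E := ℝ) (F := ℝ)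
        (p := p)).mul_const m.2)).const_add m.2
    refine this.congr_fderiv ?_
    ext <;> simp [smul_smul]
  exact h1.prodMk h2

lemma B_det (m : ℝ × ℝ) (p : ℝ × ℝ) :
    (B m p).det = p.1 * (1 - m.1 * cos p.2 - m.2 * sin p.2) := by
  simp only [B, ContinuousLinearMap.det, LinearMap.coe_toContinuousLinearMap,
    LinearMap.det_toLin, Matrix.det_fin_two_of]
  linear_combination p.1 * (sin_sq_add_cos_sq p.2)

lemma one_sub_dot_pos (m : ℝ × ℝ) (hm : m.1 ^ 2 + m.2 ^ 2 < 1) {c d : ℝ}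
    (hcd : c ^ 2 + d ^ 2 = 1) : 0 < 1 - m.1 * c - m.2 * d := by
  nlinarith [sq_nonneg (m.1 * d - m.2 * c), sq_nonneg (m.1 * c + m.2 * d - 1)]

lemma injOn (m : ℝ × ℝ) (hm : m.1 ^ 2 + m.2 ^ 2 < 1) {a b : ℝ} (hba : b - a ≤ 2 * π) :
    Set.InjOn (g m) (Ioo 0 1 ×ˢ Ioo a b) := by
  rintro ⟨s, θ⟩ ⟨hs, hθ⟩ ⟨s', θ'⟩ ⟨hs', hθ'⟩ h
  simp only [mem_Ioo] at hs hθ hs' hθ'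
  simp only [g, Prod.ext_iff, Prod.fst_add, Prod.snd_add, Prod.smul_fst, Prod.smul_snd,
    Prod.fst_sub, Prod.snd_sub, smul_eq_mul] at h
  obtain ⟨h1, h2⟩ := h
  have hcd : cos θ ^ 2 + sin θ ^ 2 = 1 := by rw [add_comm]; exact sin_sq_add_cos_sq θ
  have hcd' : cos θ' ^ 2 + sin θ' ^ 2 = 1 := by rw [add_comm]; exact sin_sq_add_cos_sq θ'
  have dot := one_sub_dot_pos m hm hcd
  have dot' := one_sub_dot_pos m hm hcd'
  have hA : s ^ 2 = s' ^ 2 + 2 * s' * (s - s') * (m.1 * cos θ' + m.2 * sin θ')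
      + (s - s') ^ 2 * (m.1 ^ 2 + m.2 ^ 2) := by
    have e1 : s * cos θ = s' * cos θ' + (s - s') * m.1 := by linarith
    have e2 : s * sin θ = s' * sin θ' + (s - s') * m.2 := by linarith
    have q1 : (s * cos θ)^2 = (s' * cos θ' + (s - s') * m.1)^2 := by rw [e1]
    have q2 : (s * sin θ)^2 = (s' * sin θ' + (s - s') * m.2)^2 := by rw [e2]
    linear_combination q1 + q2 - s^2 * hcd + s'^2 * hcd'
  have hB : s' ^ 2 = s ^ 2 + 2 * s * (s' - s) * (m.1 * cos θ + m.2 * sin θ)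
      + (s' - s) ^ 2 * (m.1 ^ 2 + m.2 ^ 2) := by
    have e1 : s' * cos θ' = s * cos θ + (s' - s) * m.1 := by linarith
    have e2 : s' * sin θ' = s * sin θ + (s' - s) * m.2 := by linarith
    have q1 : (s' * cos θ')^2 = (s * cos θ + (s' - s) * m.1)^2 := by rw [e1]
    have q2 : (s' * sin θ')^2 = (s * sin θ + (s' - s) * m.2)^2 := by rw [e2]
    linear_combination q1 + q2 - s'^2 * hcd' + s^2 * hcd
  have hss : s = s' := by
    rcases lt_trichotomy s s' with hlt | heq | hgt
    · exfalso
      nlinarith [hB, mul_pos (mul_pos hs.1 (sub_pos.2 hlt)) dot,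
        mul_pos (mul_pos (sub_pos.2 hlt) (sub_pos.2 hlt)) (sub_pos.2 hm)]
    · exact heq
    · exfalso
      nlinarith [hA, mul_pos (mul_pos hs'.1 (sub_pos.2 hgt)) dot',
        mul_pos (mul_pos (sub_pos.2 hgt) (sub_pos.2 hgt)) (sub_pos.2 hm)]
  subst hss
  have hs0 : s ≠ 0 := ne_of_gt hs.1
  have hc : cos θ = cos θ' := by
    have := mul_left_cancel₀ hs0 (add_left_cancel h1)
    linarith [this]
  have hsn : sin θ = sin θ' := by
    have := mul_left_cancel₀ hs0 (add_left_cancel h2)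
    linarith [this]
  have hθeq : θ = θ' := by
    have h3 : Complex.exp (θ * Complex.I) = Complex.exp (θ' * Complex.I) := by
      rw [Complex.exp_mul_I, Complex.exp_mul_I]
      simp only [← Complex.ofReal_cos, ← Complex.ofReal_sin, hc, hsn]
    rw [Complex.exp_eq_exp_iff_exists_int] at h3
    obtain ⟨n, hn⟩ := h3
    have him := congrArg Complex.im hn
    simp [Complex.add_im, Complex.mul_im] at him
    have hb1 : |θ - θ'| < 2 * π := by
      rw [abs_sub_lt_iff]
      constructor <;> linarith [hθ.1, hθ.2, hθ'.1, hθ'.2]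
    have hn0 : n = 0 := by
      by_contra hn0
      have h1n : (1:ℝ) ≤ |(n:ℝ)| := by
        exact_mod_cast Int.one_le_abs (by exact_mod_cast hn0)
      have : |θ - θ'| = |(n:ℝ)| * (2 * π) := by
        rw [← abs_of_pos (by positivity : (0:ℝ) < 2 * π), ← abs_mul]
        congr 1
        linarith [him]
      nlinarith [pi_pos]
    rw [hn0] at him
    simpa using him
  simp [hθeq]

lemma set_eq (m : ℝ × ℝ) (a b : ℝ) (hm : m.1 ^ 2 + m.2 ^ 2 < 1) :
    {u : ℝ × ℝ | u.1 ^ 2 + u.2 ^ 2 ≤ 1 ∧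
      ∃ t ≥ (1 : ℝ), ∃ θ ∈ Set.Icc a b, m + t • (u - m) = (Real.cos θ, Real.sin θ)}
      = g m '' (Ioc 0 1 ×ˢ Icc a b) := by
  ext u
  simp only [mem_setOf_eq, mem_image, mem_prod, mem_Ioc, mem_Icc, Prod.exists]
  constructor
  · rintro ⟨hu, t, ht, θ, hθ, heq⟩
    have ht0 : t ≠ 0 := by intro h; rw [h] at ht; linarith
    refine ⟨1/t, θ, ⟨⟨by positivity, by rw [div_le_one (by linarith)]; linarith⟩, hθ⟩, ?_⟩
    have h4 : (1/t) • (((cos θ, sin θ) : ℝ × ℝ) - m) = u - m := by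
      rw [← heq, add_sub_cancel_left, smul_smul, one_div, inv_mul_cancel₀ ht0, one_smul]
    show m + (1/t) • _ = u
    rw [h4, add_sub_cancel]
  · rintro ⟨s, θ, ⟨⟨hs0, hs1⟩, hθ⟩, heq⟩
    have hs0' : s ≠ 0 := ne_of_gt hs0
    have hum : u - m = s • (((cos θ, sin θ) : ℝ × ℝ) - m) := by
      rw [← heq]; simp [g]
    have hu1 : u.1 = m.1 + s * (cos θ - m.1) := by
      have := congrArg Prod.fst hum
      simp at this; linarith
    have hu2 : u.2 = m.2 + s * (sin θ - m.2) := by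
      have := congrArg Prod.snd hum
      simp at this; linarith
    refine ⟨?_, 1/s, ?_, θ, hθ, ?_⟩
    · rw [hu1, hu2]
      have hcd : cos θ ^ 2 + sin θ ^ 2 = 1 := by rw [add_comm]; exact sin_sq_add_cos_sq θ
      have dot := one_sub_dot_pos m hm hcd
      nlinarith [hcd, mul_nonneg (sq_nonneg (1 - s)) (sub_nonneg.2 hm.le),
        mul_nonneg (mul_nonneg hs0.le (sub_nonneg.2 hs1)) dot.le]
    · rw [ge_iff_le, le_div_iff₀ hs0]; linarith
    · rw [hum, smul_smul, one_div, inv_mul_cancel₀ hs0', one_smul, add_sub_cancel]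

lemma null_line (m : ℝ × ℝ) (θ : ℝ) (hm : m.1 ^ 2 + m.2 ^ 2 < 1) :
    volume (g m '' (Ioc 0 1 ×ˢ {θ})) = 0 := by
  have hne : m ≠ (cos θ, sin θ) := by
    intro h
    have h1 : m.1 = cos θ := by rw [h]
    have h2 : m.2 = sin θ := by rw [h]
    rw [h1, h2] at hm
    nlinarith [sin_sq_add_cos_sq θ]
  have hsub : g m '' (Ioc 0 1 ×ˢ {θ})
      ⊆ (affineSpan ℝ {m, ((cos θ, sin θ) : ℝ × ℝ)} : Set (ℝ × ℝ)) := by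
    rintro u ⟨⟨s, θ'⟩, ⟨hs, rfl⟩, rfl⟩
    have : g m (s, θ') = AffineMap.lineMap m ((cos θ', sin θ') : ℝ × ℝ) s := by
      simp [g, AffineMap.lineMap_apply]; abel
    rw [this]
    exact AffineMap.lineMap_mem_affineSpan_pair s m _
  refine measure_mono_null hsub (Measure.addHaar_affineSubspace _ _ ?_)
  intro htop
  have hdir : (affineSpan ℝ {m, ((cos θ, sin θ) : ℝ × ℝ)}).direction = ⊤ := by
    rw [htop]; exact AffineSubspace.direction_top ℝ _ _
  rw [direction_affineSpan, vectorSpan_pair] at hdir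
  have h1 : Module.finrank ℝ (ℝ ∙ (m -ᵥ ((cos θ, sin θ) : ℝ × ℝ))) = 1 :=
    finrank_span_singleton (by simpa [vsub_eq_sub, sub_eq_zero] using hne)
  rw [hdir, finrank_top] at h1
  have h2 : Module.finrank ℝ (ℝ × ℝ) = 2 := by
    simp [Module.finrank_prod]
  omega

lemma null_circle : volume {u : ℝ × ℝ | u.1 ^ 2 + u.2 ^ 2 = 1} = 0 := by
  have hmeas : MeasurableSet {u : ℝ × ℝ | u.1 ^ 2 + u.2 ^ 2 = 1} := by
    apply measurableSet_eq_fun <;> fun_prop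
  rw [Measure.volume_eq_prod, Measure.prod_apply hmeas]
  have : ∀ x : ℝ, (volume (Prod.mk x ⁻¹' {u : ℝ × ℝ | u.1 ^ 2 + u.2 ^ 2 = 1})) = 0 := by
    intro x
    have hsub : (Prod.mk x ⁻¹' {u : ℝ × ℝ | u.1 ^ 2 + u.2 ^ 2 = 1})
        ⊆ {Real.sqrt (1 - x ^ 2), -Real.sqrt (1 - x ^ 2)} := by
      intro y hy
      simp only [mem_preimage, mem_setOf_eq] at hy
      have hy2 : y ^ 2 = 1 - x ^ 2 := by linarith
      have : y = Real.sqrt (1 - x ^ 2) ∨ y = -Real.sqrt (1 - x ^ 2) := by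
        rcases le_or_gt 0 y with h | h
        · left; rw [← hy2, Real.sqrt_sq h]
        · right; rw [← hy2, Real.sqrt_sq_eq_abs, abs_of_neg h, neg_neg]
      simpa using this
    exact measure_mono_null hsub ((Set.toFinite _).measure_zero _)
  simp only [this, lintegral_zero]

lemma null_top (m : ℝ × ℝ) (S : Set ℝ) : volume (g m '' ({1} ×ˢ S)) = 0 := by
  refine measure_mono_null ?_ null_circle
  rintro u ⟨⟨s, θ⟩, ⟨hs, hθ⟩, rfl⟩
  simp only [mem_singleton_iff] at hs
  subst hs
  simp only [g, one_smul, add_sub_cancel, mem_setOf_eq]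
  rw [add_comm]
  exact sin_sq_add_cos_sq θ

lemma integral_theta (m : ℝ × ℝ) {a b : ℝ} (hab : a ≤ b) :
    (∫ θ in Ioo a b, (1 - m.1 * cos θ - m.2 * sin θ))
      = (b - a) - m.1 * (sin b - sin a) - m.2 * (cos a - cos b) := by
  rw [← integral_Ioc_eq_integral_Ioo, ← intervalIntegral.integral_of_le hab]
  have i1 : IntervalIntegrable (fun _ : ℝ => (1:ℝ)) volume a b := intervalIntegrable_const
  have i2 : IntervalIntegrable (fun θ : ℝ => m.1 * cos θ) volume a b := by
    apply Continuous.intervalIntegrable; fun_prop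
  have i3 : IntervalIntegrable (fun θ : ℝ => m.2 * sin θ) volume a b := by
    apply Continuous.intervalIntegrable; fun_prop
  rw [show (fun θ : ℝ => 1 - m.1 * cos θ - m.2 * sin θ)
      = fun θ : ℝ => (1 - m.1 * cos θ) - m.2 * sin θ from rfl,
    intervalIntegral.integral_sub (i1.sub i2) i3,
    intervalIntegral.integral_sub i1 i2,
    intervalIntegral.integral_const_mul, intervalIntegral.integral_const_mul,
    integral_cos, integral_sin]
  simp only [intervalIntegral.integral_const, smul_eq_mul, mul_one]

lemma image_volume (m : ℝ × ℝ) (hm : m.1 ^ 2 + m.2 ^ 2 < 1) {a b : ℝ} (hab : a ≤ b)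
    (hba : b - a ≤ 2 * π) :
    volume (g m '' (Ioo 0 1 ×ˢ Ioo a b))
      = ENNReal.ofReal
        (((b - a) - m.1 * (sin b - sin a) - m.2 * (cos a - cos b)) / 2) := by
  have hmeas : MeasurableSet (Ioo (0:ℝ) 1 ×ˢ Ioo a b) :=
    measurableSet_Ioo.prod measurableSet_Ioo
  rw [← lintegral_abs_det_fderiv_eq_addHaar_image volume hmeas
    (fun p _ => (hasFDerivAt_g m p).hasFDerivWithinAt) (injOn m hm hba)]
  set f : ℝ × ℝ → ℝ := fun p => p.1 * (1 - m.1 * cos p.2 - m.2 * sin p.2) with hf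
  have habs : ∀ p ∈ Ioo (0:ℝ) 1 ×ˢ Ioo a b, |(B m p).det| = f p := by
    rintro ⟨s, θ⟩ ⟨hs, hθ⟩
    rw [B_det]
    refine abs_of_nonneg ?_
    have := one_sub_dot_pos m hm (c := cos θ) (d := sin θ)
      (by rw [add_comm]; exact sin_sq_add_cos_sq θ)
    exact le_of_lt (mul_pos hs.1 this)
  have hfc : Continuous f := by fun_prop
  have hint : IntegrableOn f (Ioo (0:ℝ) 1 ×ˢ Ioo a b) volume := by
    refine (hfc.continuousOn.integrableOn_compact
      ((isCompact_Icc (a := (0:ℝ)) (b := 1)).prod (isCompact_Icc (a := a) (b := b)))).mono_set ?_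
    exact Set.prod_mono Ioo_subset_Icc_self Ioo_subset_Icc_self
  calc ∫⁻ p in Ioo (0:ℝ) 1 ×ˢ Ioo a b, ENNReal.ofReal |(B m p).det|
      = ∫⁻ p in Ioo (0:ℝ) 1 ×ˢ Ioo a b, ENNReal.ofReal (f p) := by
        refine setLIntegral_congr_fun hmeas ?_
        exact fun p hp => by rw [habs p hp]
    _ = ENNReal.ofReal (∫ p in Ioo (0:ℝ) 1 ×ˢ Ioo a b, f p) := by
        rw [← ofReal_integral_eq_lintegral_ofReal hint ((ae_restrict_iff' hmeas).2
          (.of_forall fun p hp => by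
            simp only [Pi.zero_apply]; rw [← habs p hp]; positivity))]
    _ = ENNReal.ofReal (((b - a) - m.1 * (sin b - sin a) - m.2 * (cos a - cos b)) / 2) := by
        congr 1
        have hprod : ∫ p in Ioo (0:ℝ) 1 ×ˢ Ioo a b, f p
            = (∫ x in Ioo (0:ℝ) 1, x) * (∫ θ in Ioo a b, (1 - m.1 * cos θ - m.2 * sin θ)) := by
          rw [Measure.volume_eq_prod, ← Measure.prod_restrict]
          exact integral_prod_mul (L := ℝ) (fun x => x)
            (fun θ => 1 - m.1 * cos θ - m.2 * sin θ)
        rw [hprod]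
        have h1 : (∫ x in Ioo (0:ℝ) 1, x) = 1/2 := by
          rw [← integral_Ioc_eq_integral_Ioo,
            ← intervalIntegral.integral_of_le (by norm_num : (0:ℝ) ≤ 1), integral_id]
          norm_num
        rw [h1, integral_theta m hab]
        ring

lemma shadowMeasure_eq (a b : ℝ) (hab : a ≤ b) (hba : b - a ≤ 2 * π) (m : ℝ × ℝ)
    (hm : m.1 ^ 2 + m.2 ^ 2 < 1) :
    shadowMeasure a b m
      = ((b - a) - m.1 * (sin b - sin a) - m.2 * (cos a - cos b)) / 2 := by
  have hval : 0 ≤ ((b - a) - m.1 * (sin b - sin a) - m.2 * (cos a - cos b)) / 2 := by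
    rw [← integral_theta m hab]
    have h2 : 0 ≤ ∫ θ in Ioo a b, (1 - m.1 * cos θ - m.2 * sin θ) := by
      refine setIntegral_nonneg measurableSet_Ioo fun θ _ => ?_
      exact (one_sub_dot_pos m hm (by rw [add_comm]; exact sin_sq_add_cos_sq θ)).le
    linarith
  have hvol : volume (g m '' (Ioc 0 1 ×ˢ Icc a b))
      = volume (g m '' (Ioo 0 1 ×ˢ Ioo a b)) := by
    refine le_antisymm ?_ (measure_mono (Set.image_mono
      (Set.prod_mono Ioo_subset_Ioc_self Ioo_subset_Icc_self)))
    have hsub : g m '' (Ioc 0 1 ×ˢ Icc a b) ⊆ g m '' (Ioo 0 1 ×ˢ Ioo a b)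
        ∪ (g m '' ({1} ×ˢ Icc a b) ∪ g m '' (Ioc 0 1 ×ˢ {a}) ∪ g m '' (Ioc 0 1 ×ˢ {b})) := by
      rintro u ⟨⟨s, θ⟩, ⟨hs, hθ⟩, rfl⟩
      rcases eq_or_lt_of_le hs.2 with h1 | h1
      · exact Or.inr (Or.inl (Or.inl ⟨(s, θ), ⟨show s ∈ ({1} : Set ℝ) from h1, hθ⟩, rfl⟩))
      rcases eq_or_lt_of_le hθ.1 with h2 | h2
      · exact Or.inr (Or.inl (Or.inr ⟨(s, θ), ⟨hs, show θ ∈ ({a} : Set ℝ) from h2.symm⟩, rfl⟩))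
      rcases eq_or_lt_of_le hθ.2 with h3 | h3
      · exact Or.inr (Or.inr ⟨(s, θ), ⟨hs, show θ ∈ ({b} : Set ℝ) from h3⟩, rfl⟩)
      · exact Or.inl ⟨(s, θ), ⟨⟨hs.1, h1⟩, ⟨h2, h3⟩⟩, rfl⟩
    have hnull : volume (g m '' ({1} ×ˢ Icc a b) ∪ g m '' (Ioc 0 1 ×ˢ {a})
        ∪ g m '' (Ioc 0 1 ×ˢ {b})) = 0 := by
      refine measure_union_null (measure_union_null ?_ ?_) ?_
      · exact null_top m _
      · exact null_line m a hm
      · exact null_line m b hm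
    calc volume (g m '' (Ioc 0 1 ×ˢ Icc a b))
        ≤ volume (g m '' (Ioo 0 1 ×ˢ Ioo a b)
          ∪ (g m '' ({1} ×ˢ Icc a b) ∪ g m '' (Ioc 0 1 ×ˢ {a}) ∪ g m '' (Ioc 0 1 ×ˢ {b}))) :=
          measure_mono hsub
      _ ≤ volume (g m '' (Ioo 0 1 ×ˢ Ioo a b)) + volume (g m '' ({1} ×ˢ Icc a b)
          ∪ g m '' (Ioc 0 1 ×ˢ {a}) ∪ g m '' (Ioc 0 1 ×ˢ {b})) := measure_union_le _ _
      _ = volume (g m '' (Ioo 0 1 ×ˢ Ioo a b)) := by rw [hnull, add_zero]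
  rw [shadowMeasure, set_eq m a b hm, hvol, image_volume m hm hab hba,
    ENNReal.toReal_ofReal hval]

end ShadowAux

/-- The map `μ ↦ shadowMeasure a b μ` is affine on the open unit disk. -/
theorem shadowMeasure_affine (a b : ℝ) (hab : a ≤ b) (hba : b - a ≤ 2 * π)
    (μ ν : ℝ × ℝ) (hμ : μ.1 ^ 2 + μ.2 ^ 2 < 1) (hν : ν.1 ^ 2 + ν.2 ^ 2 < 1)
    (c : ℝ) (hc0 : 0 ≤ c) (hc1 : c ≤ 1) :
    shadowMeasure a b (c • μ + (1 - c) • ν)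
      = c * shadowMeasure a b μ + (1 - c) * shadowMeasure a b ν := by
  have hw1 : (c • μ + (1 - c) • ν).1 = c * μ.1 + (1 - c) * ν.1 := by simp
  have hw2 : (c • μ + (1 - c) • ν).2 = c * μ.2 + (1 - c) * ν.2 := by simp
  have hmem : (c • μ + (1 - c) • ν).1 ^ 2 + (c • μ + (1 - c) • ν).2 ^ 2 < 1 := by
    rw [hw1, hw2]
    nlinarith [mul_nonneg (mul_nonneg hc0 (sub_nonneg.2 hc1))
      (add_nonneg (sq_nonneg (μ.1 - ν.1)) (sq_nonneg (μ.2 - ν.2))), hμ, hν,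
      mul_nonneg hc0 (sub_pos.2 hμ).le, mul_nonneg (sub_nonneg.2 hc1) (sub_pos.2 hν).le]
  rw [ShadowAux.shadowMeasure_eq a b hab hba _ hmem,
    ShadowAux.shadowMeasure_eq a b hab hba μ hμ,
    ShadowAux.shadowMeasure_eq a b hab hba ν hν, hw1, hw2]
  ring
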